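/- For 0 ≤ λ ≤ κ < 1, the integral (1/π)∫₀¹ du/√(u(1−u)(1−κu)(1−λu)) equals (1/√(1−λ)) · (1/π)∫₀¹ dv/√(v(1−v)(1 − ((κ−λ)/(1−λ))v)), obtained by the change of variable v = (1−λ)u/(1−λu). -/

import Mathlib

open intervalIntegral Real MeasureTheory

theorem stmt_4 (κ lam : ℝ) (hlam : 0 ≤ lam) (hlk : lam ≤ κ) (hκ1 : κ < 1) :
    (1 / π) * ∫ u in (0:ℝ)..1,
        1 / Real.sqrt (u * (1 - u) * (1 - κ * u) * (1 - lam * u))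
      = (1 / Real.sqrt (1 - lam)) * ((1 / π) * ∫ v in (0:ℝ)..1,
          1 / Real.sqrt (v * (1 - v) * (1 - ((κ - lam) / (1 - lam)) * v))) := by
  have hκ0 : 0 ≤ κ := le_trans hlam hlk
  have hl1 : lam < 1 := lt_of_le_of_lt hlk hκ1
  have h1l : (0:ℝ) < 1 - lam := by linarith
  set μ := (κ - lam) / (1 - lam) with hμ
  set φ : ℝ → ℝ := fun u => (1 - lam) * u / (1 - lam * u) with hφ
  set φ' : ℝ → ℝ := fun u => (1 - lam) / (1 - lam * u) ^ 2 with hφ'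
  have hden : ∀ x ∈ Set.Ioo (0:ℝ) 1, 0 < 1 - lam * x := by
    intro x hx
    nlinarith [hx.1, hx.2]
  -- image of (0,1) under φ is (0,1)
  have himg : φ '' Set.Ioo (0:ℝ) 1 = Set.Ioo (0:ℝ) 1 := by
    ext y
    constructor
    · rintro ⟨x, hx, rfl⟩
      have hd := hden x hx
      constructor
      · exact div_pos (by nlinarith [hx.1]) hd
      · rw [div_lt_one hd]
        nlinarith [hx.1, hx.2]
    · intro hy
      have hd : (0:ℝ) < 1 - lam + lam * y := by nlinarith [hy.1, hy.2]
      refine ⟨y / (1 - lam + lam * y), ⟨div_pos hy.1 hd, ?_⟩, ?_⟩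
      · rw [div_lt_one hd]; nlinarith [hy.1, hy.2]
      · have h2 : 1 - lam * (y / (1 - lam + lam * y)) = (1 - lam) / (1 - lam + lam * y) := by
          field_simp
          ring
        simp only [hφ]
        rw [h2]
        field_simp
  have hinj : Set.InjOn φ (Set.Ioo (0:ℝ) 1) := by
    intro a ha b hb h
    have hda := (hden a ha).ne'
    have hdb := (hden b hb).ne'
    simp only [hφ] at h
    field_simp at h
    nlinarith [h]
  have hderiv : ∀ x ∈ Set.Ioo (0:ℝ) 1,
      HasDerivWithinAt φ (φ' x) (Set.Ioo (0:ℝ) 1) x := by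
    intro x hx
    have hd := (hden x hx).ne'
    have h1 : HasDerivAt (fun u : ℝ => (1 - lam) * u) (1 - lam) x := by
      simpa using (hasDerivAt_id x).const_mul (1 - lam)
    have h2 : HasDerivAt (fun u : ℝ => 1 - lam * u) (-lam) x := by
      simpa using ((hasDerivAt_id x).const_mul lam).const_sub 1
    have h3 := h1.div h2 hd
    have : ((1 - lam) * (1 - lam * x) - (1 - lam) * x * (-lam)) / (1 - lam * x) ^ 2 = φ' x := by
      rw [hφ']
      congr 1
      ring
    rw [this] at h3
    exact h3.hasDerivWithinAt
  have key : (∫ v in Set.Ioo (0:ℝ) 1, 1 / Real.sqrt (v * (1 - v) * (1 - μ * v)))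
      = Real.sqrt (1 - lam) *
        ∫ u in Set.Ioo (0:ℝ) 1, 1 / Real.sqrt (u * (1 - u) * (1 - κ * u) * (1 - lam * u)) := by
    have heq := integral_image_eq_integral_abs_deriv_smul measurableSet_Ioo hderiv hinj
        (fun v => 1 / Real.sqrt (v * (1 - v) * (1 - μ * v)))
    rw [himg] at heq
    rw [heq, ← MeasureTheory.integral_const_mul]
    apply MeasureTheory.setIntegral_congr_fun measurableSet_Ioo
    intro x hx
    have hd := hden x hx
    have hx0 := hx.1
    have hx1 : (0:ℝ) < 1 - x := by linarith [hx.2]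
    have hκx : (0:ℝ) < 1 - κ * x := by nlinarith [hx.1, hx.2]
    have hφpos : 0 < φ' x := div_pos h1l (by positivity)
    have hX : φ x * (1 - φ x) * (1 - μ * φ x)
        = (1 - lam) * x * (1 - x) * (1 - κ * x) / (1 - lam * x) ^ 3 := by
      simp only [hφ, hμ]
      field_simp
      ring
    simp only [smul_eq_mul]
    rw [abs_of_pos hφpos, hX]
    rw [mul_one_div, mul_one_div, ← Real.sqrt_sq hφpos.le,
      ← Real.sqrt_div (by positivity), ← Real.sqrt_div h1l.le]
    congr 1
    simp only [hφ']
    field_simp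
  rw [intervalIntegral.integral_of_le zero_le_one, intervalIntegral.integral_of_le zero_le_one,
    MeasureTheory.integral_Ioc_eq_integral_Ioo, MeasureTheory.integral_Ioc_eq_integral_Ioo, key]
  have hs : Real.sqrt (1 - lam) ≠ 0 := by positivity
  field_simp
  exact MeasureTheory.setIntegral_congr_fun measurableSet_Ioo (fun t _ => by ring_nf)
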